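/- arXiv:2005.03296 — 3 statements merged into one kernel-verified Lean document; each statement's English description precedes it below -/
import Mathlib

section
/- Let f ∈ L¹(ℝ) and w₀ ∈ ℂ with Im(w₀) ≠ 0, and let k ≥ 1 be an integer. Then there exists y₀ ∈ L¹(ℝ) such that F(y₀)(w) = F(f)(w)/(w - w₀)^k for all real w. -/
open MeasureTheory Complex Filter

noncomputable def fourierT (f : ℝ → ℂ) (w : ℝ) : ℂ :=
  ∫ t : ℝ, Complex.exp (-(Complex.I * w * t)) * f t

noncomputable def heaviside (t : ℝ) : ℂ := if 0 ≤ t then 1 else 0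

open Set in
lemma stmt3_intOn (c : ℂ) (hc : c.re < 0) :
    IntegrableOn (fun t : ℝ => Complex.exp (c * t)) (Ioi 0) := by
  apply Integrable.mono' (g := fun t : ℝ => Real.exp (c.re * t)) ?_ ?_ ?_
  · exact (exp_neg_integrableOn_Ioi 0 (by linarith : 0 < -c.re)).congr_fun
      (fun t _ => by simp only [neg_neg]) measurableSet_Ioi
  · exact (Complex.continuous_exp.comp (by continuity)).aestronglyMeasurable
  · filter_upwards with t
    rw [Complex.norm_exp]
    simp [Complex.mul_re]

open Set in
lemma stmt3_intVal (c : ℂ) (hc : c.re < 0) :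
    ∫ t : ℝ in Ioi 0, Complex.exp (c * t) = -1 / c := by
  have hc0 : c ≠ 0 := fun h => by simp [h] at hc
  have h := integral_Ioi_of_hasDerivAt_of_tendsto' (a := 0)
    (f := fun t : ℝ => Complex.exp (c * t) / c) (f' := fun t : ℝ => Complex.exp (c * t))
    (m := 0) ?_ (stmt3_intOn c hc) ?_
  · rw [h]; simp [neg_div]
  · intro x _
    have : HasDerivAt (fun t : ℝ => Complex.exp (c * t)) (Complex.exp (c * x) * c) x := by
      have h1 : HasDerivAt (fun t : ℝ => c * (t : ℂ)) c x := by
        simpa using (Complex.ofRealCLM.hasDerivAt (x := x)).const_mul c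
      simpa [mul_comm, Function.comp_def] using (Complex.hasDerivAt_exp (c * x)).comp x h1
    simpa [hc0] using this.div_const c
  · have : Tendsto (fun t : ℝ => Complex.exp (c * t)) atTop (nhds 0) := by
      rw [tendsto_zero_iff_norm_tendsto_zero]
      have : ∀ t : ℝ, ‖Complex.exp (c * t)‖ = Real.exp (c.re * t) := by
        intro t; rw [Complex.norm_exp]; simp [Complex.mul_re]
      simp_rw [this]
      exact Real.tendsto_exp_atBot.comp (tendsto_id.const_mul_atTop_of_neg hc)
    simpa using this.div_const c

lemma stmt3_conv_int (f g : ℝ → ℂ) (hf : Integrable f) (hg : Integrable g) :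
    Integrable (fun t => ∫ s : ℝ, f s * g (t - s)) := by
  have := hf.integrable_convolution (ContinuousLinearMap.mul ℝ ℂ) hg
  convert this using 1; ext t; simp [convolution]

lemma stmt3_conv_fourier (f g : ℝ → ℂ) (hf : Integrable f) (hg : Integrable g) (w : ℝ) :
    fourierT (fun t => ∫ s : ℝ, f s * g (t - s)) w = fourierT f w * fourierT g w := by
  have base : Integrable (fun p : ℝ × ℝ => f p.2 * g (p.1 - p.2)) (volume.prod volume) := by
    simpa using hf.convolution_integrand (ContinuousLinearMap.mul ℝ ℂ) hg
  have key : Integrable (fun p : ℝ × ℝ =>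
      Complex.exp (-(Complex.I * w * p.1)) * (f p.2 * g (p.1 - p.2))) (volume.prod volume) := by
    apply base.norm.mono'
    · exact ((Complex.continuous_exp.comp (by continuity)).aestronglyMeasurable.mul
        base.aestronglyMeasurable)
    · filter_upwards with p
      rw [norm_mul, Complex.norm_exp]
      simp [Complex.mul_re]
  unfold fourierT
  calc ∫ t : ℝ, Complex.exp (-(Complex.I * w * t)) * ∫ s : ℝ, f s * g (t - s)
      = ∫ t : ℝ, ∫ s : ℝ, Complex.exp (-(Complex.I * w * t)) * (f s * g (t - s)) := by
        simp_rw [integral_const_mul]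
    _ = ∫ s : ℝ, ∫ t : ℝ, Complex.exp (-(Complex.I * w * t)) * (f s * g (t - s)) := by
        exact integral_integral_swap key
    _ = ∫ s : ℝ, (Complex.exp (-(Complex.I * w * s)) * f s) *
          ∫ t : ℝ, Complex.exp (-(Complex.I * w * (t - s))) * g (t - s) := by
        congr 1; ext s
        rw [← integral_const_mul]
        congr 1; ext t
        rw [show -(Complex.I * ↑w * ↑t) = -(Complex.I * ↑w * ↑s) + -(Complex.I * ↑w * (↑t - ↑s))
          by ring, Complex.exp_add]
        ring
    _ = ∫ s : ℝ, (Complex.exp (-(Complex.I * w * s)) * f s) *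
          ∫ t : ℝ, Complex.exp (-(Complex.I * w * t)) * g t := by
        congr 1; ext s
        congr 1
        simpa using integral_sub_right_eq_self (μ := volume)
          (fun t : ℝ => Complex.exp (-(Complex.I * w * t)) * g t) s
    _ = (∫ s : ℝ, Complex.exp (-(Complex.I * w * s)) * f s) *
          ∫ t : ℝ, Complex.exp (-(Complex.I * w * t)) * g t := by
        rw [integral_mul_const]

open Set in
lemma stmt3_g_int (w₀ : ℂ) (hb : 0 < w₀.im) :
    Integrable (fun t : ℝ => if 0 ≤ t then Complex.exp (Complex.I * w₀ * t) else 0) := by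
  have heq : (fun t : ℝ => if 0 ≤ t then Complex.exp (Complex.I * w₀ * t) else 0)
      = Set.indicator (Ici 0) (fun t : ℝ => Complex.exp (Complex.I * w₀ * t)) := by
    ext t; simp [Set.indicator_apply, mem_Ici]
  rw [heq, integrable_indicator_iff measurableSet_Ici, integrableOn_Ici_iff_integrableOn_Ioi]
  have := stmt3_intOn (Complex.I * w₀) (by simp [hb])
  simpa [mul_assoc] using this

open Set in
lemma stmt3_g_fourier (w₀ : ℂ) (hb : 0 < w₀.im) (w : ℝ) :
    fourierT (fun t : ℝ => if 0 ≤ t then Complex.exp (Complex.I * w₀ * t) else 0) w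
      = -1 / (Complex.I * (w₀ - w)) := by
  unfold fourierT
  have : ∀ t : ℝ, Complex.exp (-(Complex.I * w * t)) *
      (if 0 ≤ t then Complex.exp (Complex.I * w₀ * t) else 0)
      = Set.indicator (Ici 0) (fun t : ℝ => Complex.exp ((Complex.I * (w₀ - w)) * t)) t := by
    intro t
    by_cases h : (0:ℝ) ≤ t <;>
      simp [Set.indicator_apply, mem_Ici, h, ← Complex.exp_add]
    ring_nf
  simp_rw [this]
  rw [integral_indicator measurableSet_Ici, integral_Ici_eq_integral_Ioi]
  exact stmt3_intVal (Complex.I * (w₀ - w)) (by simp [hb])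

lemma stmt3_step_pos (f : ℝ → ℂ) (hf : Integrable f) (w₀ : ℂ) (hb : 0 < w₀.im) :
    ∃ y : ℝ → ℂ, Integrable y ∧ ∀ w : ℝ, fourierT y w = fourierT f w / ((w : ℂ) - w₀) := by
  set g : ℝ → ℂ := fun t : ℝ => if 0 ≤ t then Complex.exp (Complex.I * w₀ * t) else 0 with hg
  refine ⟨fun t => Complex.I * ∫ s : ℝ, f s * g (t - s),
    ((stmt3_conv_int f g hf (stmt3_g_int w₀ hb)).const_mul _), fun w => ?_⟩
  have h1 : fourierT (fun t => Complex.I * ∫ s : ℝ, f s * g (t - s)) w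
      = Complex.I * fourierT (fun t => ∫ s : ℝ, f s * g (t - s)) w := by
    unfold fourierT
    rw [← integral_const_mul]
    congr 1; ext t; ring
  rw [h1, stmt3_conv_fourier f g hf (stmt3_g_int w₀ hb) w, stmt3_g_fourier w₀ hb w]
  have hne : ((w : ℂ) - w₀) ≠ 0 := by
    intro h
    have : ((w : ℂ) - w₀).im = 0 := by rw [h]; simp
    simp at this
    linarith
  have hne' : (w₀ - (w:ℂ)) ≠ 0 := fun h =>
    hne (by rw [← neg_sub] at h; simpa using neg_eq_zero.mp h)
  field_simp
  ring

lemma stmt3_fourier_refl (f : ℝ → ℂ) (w : ℝ) :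
    fourierT (fun t => f (-t)) w = fourierT f (-w) := by
  unfold fourierT
  have := integral_neg_eq_self (fun t : ℝ => Complex.exp (-(Complex.I * (-w : ℝ) * t)) * f t)
    (volume : Measure ℝ)
  rw [← this]
  congr 1; ext t
  push_cast
  ring_nf

lemma stmt3_step (f : ℝ → ℂ) (hf : Integrable f) (w₀ : ℂ) (hw₀ : w₀.im ≠ 0) :
    ∃ y : ℝ → ℂ, Integrable y ∧ ∀ w : ℝ, fourierT y w = fourierT f w / ((w : ℂ) - w₀) := by
  rcases hw₀.lt_or_gt with hb | hb
  · -- im w₀ < 0 : reflect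
    have hfr : Integrable (fun t : ℝ => f (-t)) := hf.comp_neg
    obtain ⟨y, hy, hFy⟩ := stmt3_step_pos (fun t => f (-t)) hfr (-w₀) (by simpa using hb)
    refine ⟨fun t => -y (-t), ?_, fun w => ?_⟩
    · exact hy.comp_neg.neg
    · have h1 : fourierT (fun t => -y (-t)) w = -fourierT (fun t => y (-t)) w := by
        unfold fourierT
        rw [← integral_neg]
        congr 1; ext t; ring
      rw [h1, stmt3_fourier_refl y w, hFy (-w)]
      have h2 : fourierT (fun t => f (-t)) (-w) = fourierT f w := by
        rw [stmt3_fourier_refl f (-w), neg_neg]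
      rw [h2]
      push_cast
      rw [show (-(w:ℂ) - -w₀) = -((w:ℂ) - w₀) by ring, div_neg, neg_neg]
  · exact stmt3_step_pos f hf w₀ hb

theorem stmt_3 (f : ℝ → ℂ) (hf : Integrable f) (w₀ : ℂ) (hw₀ : w₀.im ≠ 0)
    (k : ℕ) (hk : 1 ≤ k) :
    ∃ y₀ : ℝ → ℂ, Integrable y₀ ∧
      ∀ w : ℝ, fourierT y₀ w = fourierT f w / ((w : ℂ) - w₀) ^ k := by
  clear hk
  induction k with
  | zero => exact ⟨f, hf, fun w => by simp⟩
  | succ n ih =>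
    obtain ⟨y, hy, hFy⟩ := ih
    obtain ⟨y', hy', hFy'⟩ := stmt3_step y hy w₀ hw₀
    refine ⟨y', hy', fun w => ?_⟩
    rw [hFy' w, hFy w, div_div, ← pow_succ]
end

section
/- Let f ∈ L¹(ℝ), w₀ ∈ ℝ, and define f₁(t) = e^{i w₀ t} · ∫_{-∞}^{t} f(x) e^{-i w₀ x} dx. If f₁ ∈ L¹(ℝ), then F(f₁)(w) = F(f)(w)/(i(w - w₀)) for all real w ≠ w₀. -/
open MeasureTheory Complex Filter

section Aux
open Set Topology


lemma tendsto_Iic_atTop' {g : ℝ → ℂ} (hg : Integrable g) :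
    Tendsto (fun t : ℝ => ∫ x in Set.Iic t, g x) atTop (𝓝 (∫ x, g x)) := by
  have h : (fun t : ℝ => ∫ x in Set.Iic t, g x) = fun t => ∫ x, (Set.Iic t).indicator g x := by
    funext t; rw [integral_indicator measurableSet_Iic]
  rw [h]
  apply tendsto_integral_filter_of_dominated_convergence (fun x => ‖g x‖)
  · exact Eventually.of_forall fun t => hg.1.indicator measurableSet_Iic
  · exact Eventually.of_forall fun t =>
      Eventually.of_forall fun x => norm_indicator_le_norm_self g x
  · exact hg.norm
  · refine Eventually.of_forall fun x => ?_
    refine tendsto_const_nhds.congr' ?_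
    filter_upwards [eventually_ge_atTop x] with t ht
    simp [Set.indicator_of_mem, Set.mem_Iic.mpr ht]

lemma tendsto_Iic_atBot' {g : ℝ → ℂ} (hg : Integrable g) :
    Tendsto (fun t : ℝ => ∫ x in Set.Iic t, g x) atBot (𝓝 0) := by
  have h : (fun t : ℝ => ∫ x in Set.Iic t, g x) = fun t => ∫ x, (Set.Iic t).indicator g x := by
    funext t; rw [integral_indicator measurableSet_Iic]
  rw [h]
  have h0 : (0 : ℂ) = ∫ x : ℝ, (0 : ℂ) := by simp
  rw [h0]
  apply tendsto_integral_filter_of_dominated_convergence (fun x => ‖g x‖)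
  · exact Eventually.of_forall fun t => hg.1.indicator measurableSet_Iic
  · exact Eventually.of_forall fun t =>
      Eventually.of_forall fun x => norm_indicator_le_norm_self g x
  · exact hg.norm
  · refine Eventually.of_forall fun x => ?_
    refine tendsto_const_nhds.congr' ?_
    filter_upwards [eventually_le_atBot (x - 1)] with t ht
    have : x ∉ Set.Iic t := by simp only [Set.mem_Iic]; linarith
    simp [Set.indicator_of_notMem, this]

lemma exp_Ioc_eval {c : ℂ} (hc : c ≠ 0) (a b : ℝ) (hab : a ≤ b) :
    ∫ t in Set.Ioc a b, Complex.exp (c * t) = Complex.exp (c * b) / c - Complex.exp (c * a) / c := by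
  rw [← intervalIntegral.integral_of_le hab, integral_exp_mul_complex hc, sub_div]

lemma core {g : ℝ → ℂ} (hg : Integrable g) {c : ℂ} (hc : c ≠ 0)
    (hnorm : ∀ t : ℝ, ‖Complex.exp (c * t)‖ = 1)
    (hG : Integrable (fun t : ℝ => ∫ x in Set.Iic t, g x)) :
    ∫ t : ℝ, Complex.exp (c * t) * ∫ x in Set.Iic t, g x
      = (∫ x : ℝ, Complex.exp (c * x) * g x) / (-c) := by
  set e : ℝ → ℂ := fun t => Complex.exp (c * t) with he
  set G : ℝ → ℂ := fun t => ∫ x in Set.Iic t, g x with hGdef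
  have he_cont : Continuous e := by
    exact Complex.continuous_exp.comp (continuous_const.mul Complex.continuous_ofReal)
  -- integral of g is 0
  have hGtop : Tendsto G atTop (𝓝 (∫ x, g x)) := tendsto_Iic_atTop' hg
  have hint0 : ∫ x, g x = 0 := by
    refine IntegrableAtFilter.eq_zero_of_tendsto (μ := volume) ⟨Set.univ, univ_mem, ?_⟩ ?_ hGtop
    · simpa [IntegrableOn] using hG
    · intro s hs
      obtain ⟨a, ha⟩ := mem_atTop_sets.1 hs
      rw [← top_le_iff, ← Real.volume_Ici (a := a)]
      exact measure_mono fun x hx => ha x hx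
  have hTop0 : Tendsto (fun R : ℝ => ∫ x in Set.Iic R, g x) atTop (𝓝 0) := by
    rw [← hint0]; exact hGtop
  have hBot0 : Tendsto (fun R : ℝ => ∫ x in Set.Iic (-R), g x) atTop (𝓝 0) :=
    (tendsto_Iic_atBot' hg).comp tendsto_neg_atTop_atBot
  -- integrability facts
  have heg_int : Integrable (fun x : ℝ => e x * g x) :=
    hg.bdd_mul (c := 1) he_cont.aestronglyMeasurable (Eventually.of_forall fun x => (hnorm x).le)
  have heG_int : Integrable (fun t : ℝ => e t * G t) :=
    hG.bdd_mul (c := 1) he_cont.aestronglyMeasurable (Eventually.of_forall fun x => (hnorm x).le)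
  have hgP_int : Integrable (fun x : ℝ => g x * (e x / c)) := by
    refine ((heg_int.congr (Eventually.of_forall fun x => mul_comm _ _)).div_const c).congr
      (Eventually.of_forall fun x => ?_)
    simp [mul_div_assoc]
  -- the key truncated identity
  have key : ∀ R : ℝ, 0 ≤ R →
      ∫ t in Set.Ioc (-R) R, e t * G t
        = (∫ x in Set.Iic R, g x) * (e R / c)
          - (∫ x in Set.Iic (-R), g x) * (e (-R) / c)
          - ∫ x in Set.Ioc (-R) R, g x * (e x / c) := by
    intro R hR
    have hRR : -R ≤ R := by linarith
    set μR := volume.restrict (Set.Ioc (-R) R) with hμR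
    set K : ℝ → ℝ → ℂ := fun t x => (Set.Ioi x).indicator e t * g x with hK
    have hK_aesm : AEStronglyMeasurable (Function.uncurry K) (μR.prod volume) := by
      have h1 : AEStronglyMeasurable (fun p : ℝ × ℝ => e p.1) (μR.prod volume) :=
        (he_cont.comp continuous_fst).aestronglyMeasurable
      have h2 : AEStronglyMeasurable (fun p : ℝ × ℝ => g p.2) (μR.prod volume) := hg.1.comp_snd
      have hset : MeasurableSet {p : ℝ × ℝ | p.2 < p.1} :=
        measurableSet_lt measurable_snd measurable_fst
      have huncurry : Function.uncurry K = fun p : ℝ × ℝ =>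
          ({q : ℝ × ℝ | q.2 < q.1}.indicator (fun q => e q.1) p) * g p.2 := by
        funext p
        rcases p with ⟨t, x⟩
        simp only [Function.uncurry, hK, Set.indicator_apply, Set.mem_Ioi, Set.mem_setOf_eq]
      rw [huncurry]
      exact (h1.indicator hset).mul h2
    have hbound : Integrable (fun p : ℝ × ℝ => (1 : ℝ) * ‖g p.2‖) (μR.prod volume) :=
      Integrable.mul_prod ((integrableOn_const_iff (C := (1 : ℝ))).mpr (Or.inr measure_Ioc_lt_top)) hg.norm
    have hK_int : Integrable (Function.uncurry K) (μR.prod volume) := by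
      refine Integrable.mono' hbound hK_aesm (Eventually.of_forall fun p => ?_)
      rcases p with ⟨t, x⟩
      simp only [Function.uncurry, hK, one_mul, norm_mul]
      refine mul_le_of_le_one_left (norm_nonneg _) ?_
      by_cases h : t ∈ Set.Ioi x
      · rw [Set.indicator_of_mem h]; exact (hnorm t).le
      · rw [Set.indicator_of_notMem h]; simp
    have hswap := integral_integral_swap hK_int
    have hLHS : ∀ t : ℝ, (∫ x, K t x) = e t * G t := by
      intro t
      have hKt : (fun x => K t x) = (Set.Iio t).indicator (fun x => e t * g x) := by
        funext x
        simp only [hK, Set.indicator_apply, Set.mem_Ioi, Set.mem_Iio]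
        by_cases h : x < t <;> simp [h]
      rw [hKt, integral_indicator measurableSet_Iio, setIntegral_congr_set Iio_ae_eq_Iic,
        integral_const_mul]
    have hRHS2 : ∀ x : ℝ, (∫ t, K t x ∂μR)
        = g x * ((Set.Iic R).indicator (fun y => e R / c - e (max (-R) y) / c) x) := by
      intro x
      have h1 : (∫ t, K t x ∂μR) = (∫ t, (Set.Ioi x).indicator e t ∂μR) * g x :=
        integral_mul_const _ _
      rw [h1, hμR, setIntegral_indicator measurableSet_Ioi, Set.Ioc_inter_Ioi]
      by_cases hx : x ≤ R
      · have hmax : max (-R) x ≤ R := max_le hRR hx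
        rw [exp_Ioc_eval hc _ _ hmax, Set.indicator_of_mem (Set.mem_Iic.mpr hx)]
        ring
      · push_neg at hx
        rw [Set.Ioc_eq_empty (by simp only [not_lt]; exact le_max_of_le_right hx.le),
          Measure.restrict_empty, integral_zero_measure,
          Set.indicator_of_notMem (by simpa using hx.not_ge)]
        ring
    -- continuity and integrability of the max-term
    have hΦ_cont : Continuous (fun x : ℝ => e (max (-R) x) / c) :=
      (he_cont.comp (continuous_const.max continuous_id)).div_const c
    have hgΦ_int : Integrable (fun x : ℝ => g x * (e (max (-R) x) / c)) := by
      refine (hg.bdd_mul (c := 1 / ‖c‖) hΦ_cont.aestronglyMeasurable (Eventually.of_forall fun x => ?_)).congr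
        (Eventually.of_forall fun x => mul_comm _ _)
      rw [norm_div, hnorm]
    have hgC_int : Integrable (fun x : ℝ => g x * (e R / c)) := hg.mul_const _
    calc ∫ t in Set.Ioc (-R) R, e t * G t
        = ∫ t, (∫ x, K t x) ∂μR := by
          rw [hμR]; exact integral_congr_ae (Eventually.of_forall fun t => (hLHS t).symm)
      _ = ∫ x, (∫ t, K t x ∂μR) := integral_integral_swap hK_int
      _ = ∫ x, g x * ((Set.Iic R).indicator (fun y => e R / c - e (max (-R) y) / c) x) := by
          exact integral_congr_ae (Eventually.of_forall fun x => hRHS2 x)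
      _ = ∫ x, (Set.Iic R).indicator (fun y => g y * (e R / c) - g y * (e (max (-R) y) / c)) x := by
          refine integral_congr_ae (Eventually.of_forall fun x => ?_)
          by_cases h : x ∈ Set.Iic R
          · simp only [Set.indicator_of_mem h, mul_sub]
          · simp only [Set.indicator_of_notMem h, mul_zero]
      _ = ∫ x in Set.Iic R, (g x * (e R / c) - g x * (e (max (-R) x) / c)) :=
          integral_indicator measurableSet_Iic
      _ = (∫ x in Set.Iic R, g x * (e R / c)) - ∫ x in Set.Iic R, g x * (e (max (-R) x) / c) :=
          integral_sub hgC_int.integrableOn hgΦ_int.integrableOn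
      _ = (∫ x in Set.Iic R, g x) * (e R / c) - ∫ x in Set.Iic R, g x * (e (max (-R) x) / c) := by
          rw [integral_mul_const]
      _ = (∫ x in Set.Iic R, g x) * (e R / c)
          - ((∫ x in Set.Iic (-R), g x * (e (max (-R) x) / c))
             + ∫ x in Set.Ioc (-R) R, g x * (e (max (-R) x) / c)) := by
          rw [← Set.Iic_union_Ioc_eq_Iic hRR,
            setIntegral_union (Set.Iic_disjoint_Ioc le_rfl) measurableSet_Ioc
              hgΦ_int.integrableOn hgΦ_int.integrableOn]
      _ = (∫ x in Set.Iic R, g x) * (e R / c)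
          - (∫ x in Set.Iic (-R), g x) * (e (-R) / c)
          - ∫ x in Set.Ioc (-R) R, g x * (e x / c) := by
          rw [setIntegral_congr_fun (f := fun x : ℝ => g x * (e (max (-R) x) / c))
              (g := fun x : ℝ => g x * (e (-R) / c))
              measurableSet_Iic (fun x hx => by simp [max_eq_left (Set.mem_Iic.mp hx)]),
            setIntegral_congr_fun (f := fun x : ℝ => g x * (e (max (-R) x) / c))
              (g := fun x : ℝ => g x * (e x / c))
              measurableSet_Ioc (fun x hx => by simp [max_eq_right (le_of_lt hx.1)]),
            integral_mul_const]
          ring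
  -- limits
  have hnormP : ∀ t : ℝ, ‖e t / c‖ = 1 / ‖c‖ := by
    intro t; rw [norm_div, hnorm]
  have hA : Tendsto (fun R : ℝ => (∫ x in Set.Iic R, g x) * (e R / c)) atTop (𝓝 0) :=
    hTop0.zero_mul_isBoundedUnder_le
      (isBoundedUnder_of ⟨1 / ‖c‖, fun R => (hnormP R).le⟩)
  have hB : Tendsto (fun R : ℝ => (∫ x in Set.Iic (-R), g x) * (e (-R) / c)) atTop (𝓝 0) :=
    hBot0.zero_mul_isBoundedUnder_le
      (isBoundedUnder_of ⟨1 / ‖c‖, fun R => (hnormP (-R)).le⟩)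
  have hC : Tendsto (fun R : ℝ => ∫ x in Set.Ioc (-R) R, g x * (e x / c)) atTop
      (𝓝 (∫ x, g x * (e x / c))) := by
    refine (intervalIntegral_tendsto_integral hgP_int tendsto_neg_atTop_atBot tendsto_id).congr' ?_
    filter_upwards [eventually_ge_atTop (0 : ℝ)] with R hR
    simp only [id_eq]
    rw [intervalIntegral.integral_of_le (by linarith)]
  have hL : Tendsto (fun R : ℝ => ∫ t in Set.Ioc (-R) R, e t * G t) atTop
      (𝓝 (∫ t, e t * G t)) := by
    refine (intervalIntegral_tendsto_integral heG_int tendsto_neg_atTop_atBot tendsto_id).congr' ?_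
    filter_upwards [eventually_ge_atTop (0 : ℝ)] with R hR
    simp only [id_eq]
    rw [intervalIntegral.integral_of_le (by linarith)]
  have hRHS : Tendsto (fun R : ℝ => (∫ x in Set.Iic R, g x) * (e R / c)
      - (∫ x in Set.Iic (-R), g x) * (e (-R) / c)
      - ∫ x in Set.Ioc (-R) R, g x * (e x / c)) atTop
      (𝓝 (0 - 0 - ∫ x, g x * (e x / c))) := (hA.sub hB).sub hC
  have hmain : ∫ t, e t * G t = 0 - 0 - ∫ x, g x * (e x / c) := by
    refine tendsto_nhds_unique hL (hRHS.congr' ?_)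
    filter_upwards [eventually_ge_atTop (0 : ℝ)] with R hR
    exact (key R hR).symm
  rw [hmain]
  have heq : ∫ x : ℝ, g x * (e x / c) = (∫ x : ℝ, e x * g x) / c := by
    rw [← integral_div]
    congr 1
    funext x
    ring
  rw [heq, div_neg]
  ring

end Aux

section Main
open Set Topology

theorem stmt_5 (f : ℝ → ℂ) (hf : Integrable f) (w₀ : ℝ)
    (f₁ : ℝ → ℂ)
    (hf₁ : f₁ = fun t : ℝ => Complex.exp (Complex.I * w₀ * t) *
      ∫ x in Set.Iic t, f x * Complex.exp (-(Complex.I * w₀ * x)))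
    (hint : Integrable f₁) :
    ∀ w : ℝ, w ≠ w₀ →
      fourierT f₁ w = fourierT f w / (Complex.I * ((w : ℂ) - w₀)) := by
  intro w hw
  have hc : (-(Complex.I * ((w : ℂ) - w₀)) : ℂ) ≠ 0 := by
    simp only [neg_ne_zero, mul_ne_zero_iff, sub_ne_zero]
    exact ⟨Complex.I_ne_zero, by exact_mod_cast hw⟩
  have hnorm : ∀ t : ℝ, ‖Complex.exp (-(Complex.I * ((w : ℂ) - w₀)) * t)‖ = 1 := by
    intro t
    rw [Complex.norm_exp]
    simp [Complex.mul_re]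
  have hw0_cont : Continuous fun x : ℝ => Complex.exp (-(Complex.I * w₀ * x)) :=
    Complex.continuous_exp.comp
      ((continuous_const.mul Complex.continuous_ofReal).neg)
  have hw0_norm : ∀ x : ℝ, ‖Complex.exp (-(Complex.I * w₀ * x))‖ = 1 := by
    intro x
    rw [Complex.norm_exp]
    simp [Complex.mul_re]
  have hg : Integrable fun x : ℝ => f x * Complex.exp (-(Complex.I * w₀ * x)) := by
    refine (hf.bdd_mul (c := 1) hw0_cont.aestronglyMeasurable (Eventually.of_forall fun x => (hw0_norm x).le)).congr
      (Eventually.of_forall fun x => mul_comm _ _)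
  have hG : Integrable fun t : ℝ =>
      ∫ x in Set.Iic t, f x * Complex.exp (-(Complex.I * w₀ * x)) := by
    have heq : (fun t : ℝ => ∫ x in Set.Iic t, f x * Complex.exp (-(Complex.I * w₀ * x)))
        = fun t : ℝ => Complex.exp (-(Complex.I * w₀ * t)) * f₁ t := by
      funext t
      rw [hf₁]
      simp only
      rw [← mul_assoc, ← Complex.exp_add, neg_add_cancel, Complex.exp_zero, one_mul]
    rw [heq]
    exact hint.bdd_mul (c := 1) hw0_cont.aestronglyMeasurable (Eventually.of_forall fun x => (hw0_norm x).le)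
  have hcore := core hg hc hnorm hG
  have h1 : fourierT f₁ w = ∫ t : ℝ, Complex.exp (-(Complex.I * ((w : ℂ) - w₀)) * t) *
      ∫ x in Set.Iic t, f x * Complex.exp (-(Complex.I * w₀ * x)) := by
    unfold fourierT
    refine integral_congr_ae (Eventually.of_forall fun t => ?_)
    rw [hf₁]
    simp only
    rw [← mul_assoc, ← Complex.exp_add]
    congr 2
    ring
  have h2 : fourierT f w = ∫ x : ℝ, Complex.exp (-(Complex.I * ((w : ℂ) - w₀)) * x) *
      (f x * Complex.exp (-(Complex.I * w₀ * x))) := by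
    unfold fourierT
    refine integral_congr_ae (Eventually.of_forall fun x => ?_)
    show Complex.exp (-(Complex.I * w * x)) * f x
      = Complex.exp (-(Complex.I * ((w : ℂ) - w₀)) * x) * (f x * Complex.exp (-(Complex.I * w₀ * x)))
    rw [mul_comm (f x) _, ← mul_assoc, ← Complex.exp_add]
    congr 2
    ring
  rw [h1, hcore, h2, neg_neg]

end Main
end

section
/- Let p(w) = (w - w₁)^{n₁}(w - w₂)^{n₂}⋯(w - w_k)^{n_k} be a complex polynomial with distinct roots w₁,…,w_k, all having nonzero imaginary part, and let f ∈ L¹(ℝ). Then there exists y₀ ∈ L¹(ℝ) such that F(y₀)(w) = F(f)(w)/p(w) for all real w. -/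
open MeasureTheory Complex Filter

open Set Topology
open scoped Convolution

section aux

lemma integrableOn_cexp_Ioi {c : ℂ} (hc : c.re < 0) :
    IntegrableOn (fun t : ℝ => Complex.exp (c * t)) (Ioi 0) := by
  refine Integrable.mono' (exp_neg_integrableOn_Ioi 0 (neg_pos.mpr hc)) ?_ ?_
  · exact (Complex.continuous_exp.comp
      (continuous_const.mul Complex.continuous_ofReal)).aestronglyMeasurable
  · filter_upwards with t
    rw [Complex.norm_exp]
    have : (c * (t : ℂ)).re = c.re * t := by simp [Complex.mul_re]
    exact le_of_eq (by rw [this]; congr 1; ring)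

lemma integral_cexp_Ioi {c : ℂ} (hc : c.re < 0) :
    ∫ t in Ioi (0 : ℝ), Complex.exp (c * t) = -c⁻¹ := by
  have hc0 : c ≠ 0 := fun h => by simp [h] at hc
  have hd : ∀ x ∈ Ioi (0 : ℝ),
      HasDerivAt (fun t : ℝ => Complex.exp (c * t) / c) (Complex.exp (c * x)) x := by
    intro x _
    have h1 : HasDerivAt (fun z : ℂ => Complex.exp (c * z) / c)
        (Complex.exp (c * x)) (x : ℂ) := by
      have := (((hasDerivAt_id ((x : ℝ) : ℂ)).const_mul c).cexp).div_const c
      simpa [mul_one, mul_div_cancel_right₀ _ hc0] using this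
    exact h1.comp_ofReal
  have hcont : ContinuousWithinAt (fun t : ℝ => Complex.exp (c * t) / c) (Ici 0) 0 :=
    ((Complex.continuous_exp.comp
      (continuous_const.mul Complex.continuous_ofReal)).div_const c).continuousWithinAt
  have htend : Tendsto (fun t : ℝ => Complex.exp (c * t) / c) atTop (𝓝 0) := by
    rw [tendsto_zero_iff_norm_tendsto_zero]
    have heq : (fun t : ℝ => ‖Complex.exp (c * t) / c‖)
        = fun t : ℝ => Real.exp (c.re * t) / ‖c‖ := by
      funext t
      rw [norm_div, Complex.norm_exp]
      congr 1
      simp [Complex.mul_re]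
    rw [heq]
    have h1 : Tendsto (fun t : ℝ => c.re * t) atTop atBot :=
      tendsto_const_mul_atBot_of_neg hc |>.mpr tendsto_id
    simpa using (Real.tendsto_exp_atBot.comp h1).div_const ‖c‖
  have := integral_Ioi_of_hasDerivAt_of_tendsto hcont hd (integrableOn_cexp_Ioi hc) htend
  rw [this]
  simp

lemma integrableOn_cexp_Iio {c : ℂ} (hc : 0 < c.re) :
    IntegrableOn (fun t : ℝ => Complex.exp (c * t)) (Iio 0) := by
  have h1 : IntegrableOn (fun t : ℝ => Complex.exp (-c * t)) (Ioi 0) :=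
    integrableOn_cexp_Ioi (by simpa using hc)
  have h2 : Integrable (indicator (Ioi 0) (fun t : ℝ => Complex.exp (-c * t))) :=
    (integrable_indicator_iff measurableSet_Ioi).2 h1
  have h3 := h2.comp_neg
  have h4 : (fun t : ℝ => indicator (Ioi 0) (fun t : ℝ => Complex.exp (-c * t)) (-t))
      = indicator (Iio 0) (fun t : ℝ => Complex.exp (c * t)) := by
    funext t
    by_cases ht : t < 0
    · have h0 : (0 : ℝ) < -t := by linarith
      simp only [indicator_apply, mem_Ioi, mem_Iio, if_pos h0, if_pos ht]
      push_cast
      ring_nf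
    · have h0 : ¬ (0 : ℝ) < -t := by simp; linarith [not_lt.mp ht]
      simp [indicator_apply, ht, h0]
  rw [h4] at h3
  exact (integrable_indicator_iff measurableSet_Iio).1 h3

lemma integral_cexp_Iio {c : ℂ} (hc : 0 < c.re) :
    ∫ t in Iio (0 : ℝ), Complex.exp (c * t) = c⁻¹ := by
  have h2 : (∫ t in Ioi (0:ℝ), Complex.exp (-c * t))
      = ∫ t in Iic (-(0:ℝ)), Complex.exp (c * t) := by
    rw [← integral_comp_neg_Ioi]
    congr 1
    funext t
    congr 1
    push_cast
    ring
  rw [setIntegral_congr_set Iio_ae_eq_Iic, show Iic (0:ℝ) = Iic (-(0:ℝ)) by norm_num, ← h2,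
    integral_cexp_Ioi (by simpa using hc)]
  simp [inv_neg]

/-- Existence of an integrable kernel whose Fourier transform is `(x - w₀)⁻¹`. -/
lemma exists_kernel {w₀ : ℂ} (him : w₀.im ≠ 0) :
    ∃ g : ℝ → ℂ, Integrable g ∧ ∀ x : ℝ, fourierT g x = ((x : ℂ) - w₀)⁻¹ := by
  rcases lt_or_gt_of_ne him with hneg | hpos
  · -- Im w₀ < 0 : kernel supported on (-∞, 0)
    refine ⟨indicator (Iio 0) (fun t : ℝ => -Complex.I * Complex.exp (Complex.I * w₀ * t)), ?_, ?_⟩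
    · rw [integrable_indicator_iff measurableSet_Iio]
      exact (integrableOn_cexp_Iio (c := Complex.I * w₀) (by simpa using hneg)).const_mul _
    · intro x
      have hx : ((w₀ : ℂ) - x) ≠ 0 := by
        intro h
        have := congrArg Complex.im h
        simp at this
        exact him this
      have hc' : (0:ℝ) < (Complex.I * (w₀ - x)).re := by simpa using hneg
      have key : fourierT (indicator (Iio 0)
          (fun t : ℝ => -Complex.I * Complex.exp (Complex.I * w₀ * t))) x
          = ∫ t in Iio (0:ℝ), -Complex.I * Complex.exp ((Complex.I * (w₀ - x)) * t) := by
        unfold fourierT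
        rw [← integral_indicator measurableSet_Iio]
        congr 1
        funext t
        by_cases ht : t < 0
        · simp only [indicator_apply, mem_Iio, if_pos ht]
          have hE : (-(Complex.I*(x:ℂ)*t) + Complex.I*w₀*t) = Complex.I*(w₀-x)*t := by ring
          rw [mul_left_comm, ← Complex.exp_add, hE]
        · simp [indicator_apply, ht]
      have hx2 : ((x : ℂ) - w₀) ≠ 0 := fun h => hx (by linear_combination -h)
      have hI : Complex.I * (w₀ - ↑x) ≠ 0 := mul_ne_zero Complex.I_ne_zero hx
      rw [key, integral_const_mul, integral_cexp_Iio hc', ← div_eq_mul_inv, div_eq_iff hI,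
        eq_comm, inv_mul_eq_div, div_eq_iff hx2]
      ring
  · -- Im w₀ > 0 : kernel supported on (0, ∞)
    refine ⟨indicator (Ioi 0) (fun t : ℝ => Complex.I * Complex.exp (Complex.I * w₀ * t)), ?_, ?_⟩
    · rw [integrable_indicator_iff measurableSet_Ioi]
      exact (integrableOn_cexp_Ioi (c := Complex.I * w₀) (by simpa using hpos)).const_mul _
    · intro x
      have hx : ((w₀ : ℂ) - x) ≠ 0 := by
        intro h
        have := congrArg Complex.im h
        simp at this
        exact him this
      have hc' : (Complex.I * (w₀ - x)).re < 0 := by simpa using hpos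
      have key : fourierT (indicator (Ioi 0)
          (fun t : ℝ => Complex.I * Complex.exp (Complex.I * w₀ * t))) x
          = ∫ t in Ioi (0:ℝ), Complex.I * Complex.exp ((Complex.I * (w₀ - x)) * t) := by
        unfold fourierT
        rw [← integral_indicator measurableSet_Ioi]
        congr 1
        funext t
        by_cases ht : 0 < t
        · simp only [indicator_apply, mem_Ioi, if_pos ht]
          have hE : (-(Complex.I*(x:ℂ)*t) + Complex.I*w₀*t) = Complex.I*(w₀-x)*t := by ring
          rw [mul_left_comm, ← Complex.exp_add, hE]
        · simp [indicator_apply, ht]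
      have hx2 : ((x : ℂ) - w₀) ≠ 0 := fun h => hx (by linear_combination -h)
      have hI : Complex.I * (w₀ - ↑x) ≠ 0 := mul_ne_zero Complex.I_ne_zero hx
      rw [key, integral_const_mul, integral_cexp_Ioi hc', mul_neg, ← neg_mul, ← div_eq_mul_inv,
        div_eq_iff hI, eq_comm, inv_mul_eq_div, div_eq_iff hx2]
      ring

lemma e_norm (x t : ℝ) : ‖Complex.exp (-(Complex.I * x * t))‖ = 1 := by
  rw [Complex.norm_exp]
  simp [Complex.mul_re]

lemma integrable_e_mul (x : ℝ) (f : ℝ → ℂ) (hf : Integrable f) :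
    Integrable (fun t : ℝ => Complex.exp (-(Complex.I * x * t)) * f t) :=
  hf.bdd_mul ((Complex.continuous_exp.comp
      ((continuous_const.mul Complex.continuous_ofReal).neg)).aestronglyMeasurable)
    (Eventually.of_forall fun t => le_of_eq (e_norm x t))

lemma e_mul (x t s : ℝ) :
    Complex.exp (-(Complex.I * x * t))
      = Complex.exp (-(Complex.I * x * s)) * Complex.exp (-(Complex.I * x * ((t - s : ℝ) : ℂ))) := by
  rw [← Complex.exp_add]
  congr 1
  push_cast
  ring

lemma fourierT_convolution (f g : ℝ → ℂ) (hf : Integrable f) (hg : Integrable g) (x : ℝ) :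
    fourierT (f ⋆[ContinuousLinearMap.mul ℂ ℂ] g) x = fourierT f x * fourierT g x := by
  have hφ := integrable_e_mul x f hf
  have hψ := integrable_e_mul x g hg
  have hint : Integrable (Function.uncurry fun t s : ℝ =>
      (Complex.exp (-(Complex.I * x * s)) * f s) *
        (Complex.exp (-(Complex.I * x * ((t - s : ℝ) : ℂ))) * g (t - s)))
      ((volume : Measure ℝ).prod volume) := by
    have h := hφ.convolution_integrand (ContinuousLinearMap.mul ℂ ℂ) hψ
    simpa only [Function.uncurry_def, ContinuousLinearMap.mul_apply'] using h
  unfold fourierT convolution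
  calc (∫ t : ℝ, Complex.exp (-(Complex.I * x * t)) *
          ∫ s : ℝ, ContinuousLinearMap.mul ℂ ℂ (f s) (g (t - s)))
      = ∫ t : ℝ, ∫ s : ℝ, (Complex.exp (-(Complex.I * x * s)) * f s) *
          (Complex.exp (-(Complex.I * x * ((t - s : ℝ) : ℂ))) * g (t - s)) := by
        refine integral_congr_ae (Eventually.of_forall fun t => ?_)
        beta_reduce
        rw [← integral_const_mul]
        refine integral_congr_ae (Eventually.of_forall fun s => ?_)
        simp only [ContinuousLinearMap.mul_apply']
        rw [e_mul x t s]
        ring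
    _ = ∫ s : ℝ, ∫ t : ℝ, (Complex.exp (-(Complex.I * x * s)) * f s) *
          (Complex.exp (-(Complex.I * x * ((t - s : ℝ) : ℂ))) * g (t - s)) :=
        integral_integral_swap hint
    _ = ∫ s : ℝ, (Complex.exp (-(Complex.I * x * s)) * f s) *
          ∫ t : ℝ, Complex.exp (-(Complex.I * x * t)) * g t := by
        refine integral_congr_ae (Eventually.of_forall fun s => ?_)
        beta_reduce
        rw [integral_const_mul]
        congr 1
        exact integral_sub_right_eq_self
          (fun t : ℝ => Complex.exp (-(Complex.I * x * t)) * g t) s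
    _ = (∫ s : ℝ, Complex.exp (-(Complex.I * x * s)) * f s) *
          ∫ t : ℝ, Complex.exp (-(Complex.I * x * t)) * g t := integral_mul_const _ _

/-- Single-factor division step. -/
lemma single_step {w₀ : ℂ} (him : w₀.im ≠ 0) (f : ℝ → ℂ) (hf : Integrable f) :
    ∃ y : ℝ → ℂ, Integrable y ∧ ∀ x : ℝ, fourierT y x = fourierT f x / ((x : ℂ) - w₀) := by
  obtain ⟨g, hg, hgF⟩ := exists_kernel him
  refine ⟨f ⋆[ContinuousLinearMap.mul ℂ ℂ] g, hf.integrable_convolution _ hg, fun x => ?_⟩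
  rw [fourierT_convolution f g hf hg x, hgF x, div_eq_mul_inv]

lemma multi_step (M : Multiset ℂ) (hM : ∀ z ∈ M, z.im ≠ 0) (f : ℝ → ℂ) (hf : Integrable f) :
    ∃ y : ℝ → ℂ, Integrable y ∧
      ∀ x : ℝ, fourierT y x = fourierT f x / (M.map (fun z => (x : ℂ) - z)).prod := by
  induction M using Multiset.induction_on with
  | empty => exact ⟨f, hf, fun x => by simp⟩
  | cons a M ih =>
    obtain ⟨y, hy, hyF⟩ := ih (fun z hz => hM z (Multiset.mem_cons_of_mem hz))
    obtain ⟨y', hy', hyF'⟩ := single_step (hM a (Multiset.mem_cons_self a M)) y hy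
    refine ⟨y', hy', fun x => ?_⟩
    rw [hyF' x, hyF x, Multiset.map_cons, Multiset.prod_cons, div_div, mul_comm]

end aux

theorem stmt_7 (k : ℕ) (hk : 1 ≤ k) (w : Fin k → ℂ) (hdist : Function.Injective w)
    (him : ∀ i, (w i).im ≠ 0) (n : Fin k → ℕ) (hn : ∀ i, 1 ≤ n i)
    (f : ℝ → ℂ) (hf : Integrable f) :
    ∃ y₀ : ℝ → ℂ, Integrable y₀ ∧
      ∀ x : ℝ, fourierT y₀ x = fourierT f x / ∏ i, ((x : ℂ) - w i) ^ (n i) := by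
  set M : Multiset ℂ := ∑ i : Fin k, Multiset.replicate (n i) (w i) with hMdef
  have hM : ∀ z ∈ M, z.im ≠ 0 := by
    intro z hz
    rw [hMdef] at hz
    rw [Multiset.mem_sum] at hz
    obtain ⟨i, _, hi⟩ := hz
    rw [Multiset.eq_of_mem_replicate hi]
    exact him i
  obtain ⟨y, hy, hyF⟩ := multi_step M hM f hf
  refine ⟨y, hy, fun x => ?_⟩
  rw [hyF x]
  congr 1
  rw [hMdef]
  rw [show Multiset.map (fun z => (x : ℂ) - z) (∑ i : Fin k, Multiset.replicate (n i) (w i))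
      = ∑ i : Fin k, Multiset.map (fun z => (x : ℂ) - z) (Multiset.replicate (n i) (w i)) from
    map_sum (Multiset.mapAddMonoidHom _) _ _]
  rw [Multiset.prod_sum]
  simp [Multiset.map_replicate, Multiset.prod_replicate]
end
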